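/- There exists K < ∞ such that whenever x, y ∈ 𝔤_CM satisfy d(x,y) < 1/(2·C(ω)) (with the convention 1/0 = ∞), one has ‖y − x‖ ≤ K (1 + min(‖x‖, ‖y‖)) d(x,y). Consequently, the topology on 𝔤_CM induced by the distance d coincides with the norm topology of 𝔤_CM. -/

import Mathlib

open MeasureTheory
open scoped ENNReal

/-- The Hilbert norm `‖(A,a)‖ = √(‖A‖² + ‖a‖²)` on `𝔤_CM = H × 𝐂`. -/
noncomputable def gNorm {H C : Type*} [NormedAddCommGroup H] [NormedAddCommGroup C]
    (p : H × C) : ℝ :=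
  Real.sqrt (‖p.1‖ ^ 2 + ‖p.2‖ ^ 2)

/-- The length of the `C¹` path `s ↦ (w s, c s)`, `0 ≤ s ≤ 1`, with respect to the
left invariant Riemannian metric on the Heisenberg type group determined by `ω`. -/
noncomputable def pathLen {H C : Type*} [NormedAddCommGroup H] [InnerProductSpace ℝ H]
    [NormedAddCommGroup C] [InnerProductSpace ℝ C]
    (ω : H →L[ℝ] H →L[ℝ] C) (w : ℝ → H) (c : ℝ → C) : ℝ :=
  ∫ s in (0:ℝ)..1,
    Real.sqrt (‖deriv w s‖ ^ 2 + ‖deriv c s - (2:ℝ)⁻¹ • ω (w s) (deriv w s)‖ ^ 2)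

/-- The left invariant Riemannian distance on `𝔤_CM = H × 𝐂`. -/
noncomputable def dCM {H C : Type*} [NormedAddCommGroup H] [InnerProductSpace ℝ H]
    [NormedAddCommGroup C] [InnerProductSpace ℝ C]
    (ω : H →L[ℝ] H →L[ℝ] C) (x y : H × C) : ℝ :=
  sInf {L : ℝ | ∃ w : ℝ → H, ∃ c : ℝ → C, ContDiff ℝ 1 w ∧ ContDiff ℝ 1 c ∧
    w 0 = x.1 ∧ c 0 = x.2 ∧ w 1 = y.1 ∧ c 1 = y.2 ∧ L = pathLen ω w c}

/-! ### Auxiliary lemmas -/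

lemma sqrt_sq_add_sq_le {a b : ℝ} (ha : 0 ≤ a) (hb : 0 ≤ b) :
    Real.sqrt (a ^ 2 + b ^ 2) ≤ a + b := by
  rw [show a ^ 2 + b ^ 2 = (a + b) ^ 2 - 2 * a * b by ring]
  calc Real.sqrt ((a + b) ^ 2 - 2 * a * b) ≤ Real.sqrt ((a + b) ^ 2) :=
        Real.sqrt_le_sqrt (by nlinarith)
    _ = a + b := Real.sqrt_sq (by linarith)

lemma left_le_sqrt_sq_add_sq {a : ℝ} (b : ℝ) (ha : 0 ≤ a) :
    a ≤ Real.sqrt (a ^ 2 + b ^ 2) :=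
  calc a = Real.sqrt (a ^ 2) := (Real.sqrt_sq ha).symm
    _ ≤ _ := Real.sqrt_le_sqrt (by nlinarith)

lemma right_le_sqrt_sq_add_sq (a : ℝ) {b : ℝ} (hb : 0 ≤ b) :
    b ≤ Real.sqrt (a ^ 2 + b ^ 2) :=
  calc b = Real.sqrt (b ^ 2) := (Real.sqrt_sq hb).symm
    _ ≤ _ := Real.sqrt_le_sqrt (by nlinarith)

section AuxLemmas

variable {H C : Type*} [NormedAddCommGroup H] [InnerProductSpace ℝ H]
    [NormedAddCommGroup C] [InnerProductSpace ℝ C]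

lemma gNorm_nonneg (p : H × C) : 0 ≤ gNorm p := Real.sqrt_nonneg _

lemma fst_le_gNorm (p : H × C) : ‖p.1‖ ≤ gNorm p :=
  left_le_sqrt_sq_add_sq _ (norm_nonneg _)

lemma snd_le_gNorm (p : H × C) : ‖p.2‖ ≤ gNorm p :=
  right_le_sqrt_sq_add_sq _ (norm_nonneg _)

lemma gNorm_le (p : H × C) : gNorm p ≤ ‖p.1‖ + ‖p.2‖ :=
  sqrt_sq_add_sq_le (norm_nonneg _) (norm_nonneg _)

lemma norm_sub_le_integral_norm_deriv {w : ℝ → H} (hw : ContDiff ℝ 1 w)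
    {u v : ℝ} (huv : u ≤ v) :
    ‖w v - w u‖ ≤ ∫ s in u..v, ‖deriv w s‖ := by
  have hdw : Continuous (deriv w) := hw.continuous_deriv le_rfl
  set x := w v - w u with hx
  have hφ : ∀ s, HasDerivAt (fun s => (inner ℝ (w s) x : ℝ)) (inner ℝ (deriv w s) x) s := by
    intro s
    have h1 : HasDerivAt w (deriv w s) s := (hw.differentiable one_ne_zero s).hasDerivAt
    simpa using h1.inner ℝ (hasDerivAt_const s x)
  have hint : IntervalIntegrable (fun s => (inner ℝ (deriv w s) x : ℝ)) volume u v :=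
    (hdw.inner continuous_const).intervalIntegrable _ _
  have hftc : (∫ s in u..v, (inner ℝ (deriv w s) x : ℝ))
      = (inner ℝ (w v) x : ℝ) - inner ℝ (w u) x :=
    intervalIntegral.integral_eq_sub_of_hasDerivAt (fun s _ => hφ s) hint
  have h2 : (inner ℝ (w v) x : ℝ) - inner ℝ (w u) x = ‖x‖ ^ 2 := by
    rw [← inner_sub_left, ← hx, real_inner_self_eq_norm_sq]
  have h3 : (∫ s in u..v, (inner ℝ (deriv w s) x : ℝ))
      ≤ ∫ s in u..v, ‖deriv w s‖ * ‖x‖ := by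
    apply intervalIntegral.integral_mono_on huv hint
      ((hdw.norm.mul continuous_const).intervalIntegrable _ _)
    exact fun s _ => real_inner_le_norm _ _
  rw [intervalIntegral.integral_mul_const] at h3
  have h4 : ‖x‖ ^ 2 ≤ (∫ s in u..v, ‖deriv w s‖) * ‖x‖ := by
    rw [← h2, ← hftc]; exact h3
  rcases eq_or_lt_of_le (norm_nonneg x) with h0 | h0
  · rw [← h0]
    exact intervalIntegral.integral_nonneg huv fun s _ => norm_nonneg _
  · exact le_of_mul_le_mul_right (by nlinarith) h0

lemma pathLen_nonneg (ω : H →L[ℝ] H →L[ℝ] C) (w : ℝ → H) (c : ℝ → C) :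
    0 ≤ pathLen ω w c :=
  intervalIntegral.integral_nonneg zero_le_one fun _ _ => Real.sqrt_nonneg _

lemma pathLen_bounds [CompleteSpace C] (ω : H →L[ℝ] H →L[ℝ] C) {w : ℝ → H} {c : ℝ → C}
    (hw : ContDiff ℝ 1 w) (hc : ContDiff ℝ 1 c) {t : ℝ} (ht0 : 0 ≤ t) (ht1 : t ≤ 1) :
    ‖w 1 - w 0‖ ≤ pathLen ω w c ∧
    ‖c 1 - c 0‖ ≤ pathLen ω w c + 2⁻¹ * ‖ω‖ * pathLen ω w c ^ 2
      + 2⁻¹ * ‖ω‖ * ‖w t‖ * pathLen ω w c := by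
  have hdw : Continuous (deriv w) := hw.continuous_deriv le_rfl
  have hdc : Continuous (deriv c) := hc.continuous_deriv le_rfl
  have hwc : Continuous w := hw.continuous
  have hωs : Continuous fun s => ω (w s) (deriv w s) := ω.continuous₂.comp (hwc.prodMk hdw)
  set G : ℝ → C := fun s => deriv c s - (2:ℝ)⁻¹ • ω (w s) (deriv w s) with hGdef
  have hGcont : Continuous G := hdc.sub (continuous_const.smul hωs)
  set F : ℝ → ℝ := fun s => Real.sqrt (‖deriv w s‖ ^ 2 + ‖G s‖ ^ 2) with hFdef
  have hFcont : Continuous F :=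
    Real.continuous_sqrt.comp ((hdw.norm.pow 2).add (hGcont.norm.pow 2))
  have hℓ : pathLen ω w c = ∫ s in (0:ℝ)..1, F s := rfl
  set ℓ := pathLen ω w c with hℓdef
  set A := ∫ s in (0:ℝ)..1, ‖deriv w s‖ with hAdef
  have hA0 : 0 ≤ A := intervalIntegral.integral_nonneg zero_le_one fun s _ => norm_nonneg _
  have hAle : A ≤ ℓ := by
    rw [hℓ]
    apply intervalIntegral.integral_mono_on zero_le_one
      (hdw.norm.intervalIntegrable _ _) (hFcont.intervalIntegrable _ _)
    exact fun s _ => left_le_sqrt_sq_add_sq _ (norm_nonneg _)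
  have hBle : (∫ s in (0:ℝ)..1, ‖G s‖) ≤ ℓ := by
    rw [hℓ]
    apply intervalIntegral.integral_mono_on zero_le_one
      (hGcont.norm.intervalIntegrable _ _) (hFcont.intervalIntegrable _ _)
    exact fun s _ => right_le_sqrt_sq_add_sq _ (norm_nonneg _)
  have hw10 : ‖w 1 - w 0‖ ≤ A := norm_sub_le_integral_norm_deriv hw zero_le_one
  have hsub : ∀ u v : ℝ, 0 ≤ u → u ≤ v → v ≤ 1 → (∫ s in u..v, ‖deriv w s‖) ≤ A := by
    intro u v hu huv hv
    have i1 : IntervalIntegrable (fun s => ‖deriv w s‖) volume 0 u :=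
      hdw.norm.intervalIntegrable _ _
    have i2 : IntervalIntegrable (fun s => ‖deriv w s‖) volume u v :=
      hdw.norm.intervalIntegrable _ _
    have i3 : IntervalIntegrable (fun s => ‖deriv w s‖) volume v 1 :=
      hdw.norm.intervalIntegrable _ _
    have e1 := intervalIntegral.integral_add_adjacent_intervals i1 i2
    have e2 := intervalIntegral.integral_add_adjacent_intervals (i1.trans i2) i3
    have n1 : 0 ≤ ∫ s in (0:ℝ)..u, ‖deriv w s‖ :=
      intervalIntegral.integral_nonneg hu fun s _ => norm_nonneg _
    have n3 : 0 ≤ ∫ s in v..(1:ℝ), ‖deriv w s‖ :=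
      intervalIntegral.integral_nonneg hv fun s _ => norm_nonneg _
    rw [hAdef, ← e2, ← e1]
    linarith
  have hdistA : ∀ s, 0 ≤ s → s ≤ 1 → ‖w s - w t‖ ≤ A := by
    intro s hs0 hs1
    rcases le_total s t with h | h
    · rw [norm_sub_rev]
      calc ‖w t - w s‖ ≤ ∫ r in s..t, ‖deriv w r‖ := norm_sub_le_integral_norm_deriv hw h
        _ ≤ A := hsub s t hs0 h ht1
    · calc ‖w s - w t‖ ≤ ∫ r in t..s, ‖deriv w r‖ := norm_sub_le_integral_norm_deriv hw h
        _ ≤ A := hsub t s ht0 h hs1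
  refine ⟨le_trans hw10 hAle, ?_⟩
  set I := ∫ s in (0:ℝ)..1, ω (w s) (deriv w s) with hIdef
  have hJcont : Continuous fun s => ω (w s - w t) (deriv w s) :=
    ω.continuous₂.comp ((hwc.sub continuous_const).prodMk hdw)
  have hKcont : Continuous fun s => ω (w t) (deriv w s) := (ω (w t)).continuous.comp hdw
  set J := ∫ s in (0:ℝ)..1, ω (w s - w t) (deriv w s) with hJdef
  have hsplit : I = J + ω (w t) (w 1 - w 0) := by
    have hpt : ∀ s, ω (w s) (deriv w s)
        = ω (w s - w t) (deriv w s) + ω (w t) (deriv w s) := by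
      intro s
      rw [map_sub]
      simp [ContinuousLinearMap.sub_apply]
    have hK : (∫ s in (0:ℝ)..1, ω (w t) (deriv w s)) = ω (w t) (w 1 - w 0) := by
      have hd : ∀ s ∈ Set.uIcc (0:ℝ) 1,
          HasDerivAt (fun s => ω (w t) (w s)) (ω (w t) (deriv w s)) s := fun s _ =>
        (ω (w t)).hasFDerivAt.comp_hasDerivAt s (hw.differentiable one_ne_zero s).hasDerivAt
      rw [intervalIntegral.integral_eq_sub_of_hasDerivAt hd (hKcont.intervalIntegrable _ _),
        ← map_sub]
    calc I = ∫ s in (0:ℝ)..1, (ω (w s - w t) (deriv w s) + ω (w t) (deriv w s)) := by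
          rw [hIdef]; exact intervalIntegral.integral_congr fun s _ => hpt s
      _ = J + ω (w t) (w 1 - w 0) := by
          rw [intervalIntegral.integral_add (hJcont.intervalIntegrable _ _)
            (hKcont.intervalIntegrable _ _), hK]
  have hJ : ‖J‖ ≤ ‖ω‖ * A * A := by
    calc ‖J‖ ≤ ∫ s in (0:ℝ)..1, ‖ω (w s - w t) (deriv w s)‖ :=
          intervalIntegral.norm_integral_le_integral_norm zero_le_one
      _ ≤ ∫ s in (0:ℝ)..1, ‖ω‖ * A * ‖deriv w s‖ := by
          apply intervalIntegral.integral_mono_on zero_le_one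
            (hJcont.norm.intervalIntegrable _ _)
            ((continuous_const.mul hdw.norm).intervalIntegrable _ _)
          intro s hs
          calc ‖ω (w s - w t) (deriv w s)‖ ≤ ‖ω‖ * ‖w s - w t‖ * ‖deriv w s‖ :=
                ω.le_opNorm₂ _ _
            _ ≤ ‖ω‖ * A * ‖deriv w s‖ := by
                have := hdistA s hs.1 hs.2
                have h1 : ‖ω‖ * ‖w s - w t‖ ≤ ‖ω‖ * A :=
                  mul_le_mul_of_nonneg_left this (norm_nonneg ω)
                exact mul_le_mul_of_nonneg_right h1 (norm_nonneg _)
      _ = ‖ω‖ * A * A := by rw [intervalIntegral.integral_const_mul]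
  have hGI : (∫ s in (0:ℝ)..1, G s) = (c 1 - c 0) - (2:ℝ)⁻¹ • I := by
    rw [hGdef]
    beta_reduce
    rw [intervalIntegral.integral_sub (g := fun s => (2:ℝ)⁻¹ • ω (w s) (deriv w s))
      (hdc.intervalIntegrable _ _) ((hωs.const_smul (2:ℝ)⁻¹).intervalIntegrable _ _)]
    have hcd : (∫ s in (0:ℝ)..1, deriv c s) = c 1 - c 0 := by
      apply intervalIntegral.integral_eq_sub_of_hasDerivAt
        (fun s _ => (hc.differentiable one_ne_zero s).hasDerivAt)
        (hdc.intervalIntegrable _ _)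
    rw [hcd, intervalIntegral.integral_smul, ← hIdef]
  have hGn : ‖(c 1 - c 0) - (2:ℝ)⁻¹ • I‖ ≤ ℓ := by
    rw [← hGI]
    calc ‖∫ s in (0:ℝ)..1, G s‖ ≤ ∫ s in (0:ℝ)..1, ‖G s‖ :=
          intervalIntegral.norm_integral_le_integral_norm zero_le_one
      _ ≤ ℓ := hBle
  have hIn : ‖I‖ ≤ ‖ω‖ * A * A + ‖ω‖ * ‖w t‖ * A := by
    rw [hsplit]
    calc ‖J + ω (w t) (w 1 - w 0)‖ ≤ ‖J‖ + ‖ω (w t) (w 1 - w 0)‖ := norm_add_le _ _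
      _ ≤ ‖ω‖ * A * A + ‖ω‖ * ‖w t‖ * A := by
          have h1 : ‖ω (w t) (w 1 - w 0)‖ ≤ ‖ω‖ * ‖w t‖ * ‖w 1 - w 0‖ := ω.le_opNorm₂ _ _
          have h2 : ‖ω‖ * ‖w t‖ * ‖w 1 - w 0‖ ≤ ‖ω‖ * ‖w t‖ * A :=
            mul_le_mul_of_nonneg_left hw10 (by positivity)
          linarith
  have hfin : ‖c 1 - c 0‖ ≤ ℓ + 2⁻¹ * ‖I‖ := by
    calc ‖c 1 - c 0‖ = ‖((c 1 - c 0) - (2:ℝ)⁻¹ • I) + (2:ℝ)⁻¹ • I‖ := by abel_nf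
      _ ≤ ‖(c 1 - c 0) - (2:ℝ)⁻¹ • I‖ + ‖(2:ℝ)⁻¹ • I‖ := norm_add_le _ _
      _ ≤ ℓ + 2⁻¹ * ‖I‖ := by
          rw [norm_smul]
          simp only [norm_inv, Real.norm_ofNat]
          linarith [hGn]
  have hω0 : (0:ℝ) ≤ ‖ω‖ := norm_nonneg ω
  have hwt0 : (0:ℝ) ≤ ‖w t‖ := norm_nonneg _
  nlinarith [mul_le_mul_of_nonneg_left hAle (mul_nonneg hω0 hA0),
    mul_le_mul_of_nonneg_left hAle (mul_nonneg hω0 hwt0),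
    mul_le_mul_of_nonneg_left hAle (mul_nonneg hω0 (le_trans hA0 hAle))]

lemma linPath_mem (ω : H →L[ℝ] H →L[ℝ] C) (x y : H × C) :
    pathLen ω (fun s => x.1 + s • (y.1 - x.1)) (fun s => x.2 + s • (y.2 - x.2)) ∈
      {L : ℝ | ∃ w : ℝ → H, ∃ c : ℝ → C, ContDiff ℝ 1 w ∧ ContDiff ℝ 1 c ∧
        w 0 = x.1 ∧ c 0 = x.2 ∧ w 1 = y.1 ∧ c 1 = y.2 ∧ L = pathLen ω w c} :=
  ⟨_, _, contDiff_const.add (contDiff_id.smul contDiff_const),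
    contDiff_const.add (contDiff_id.smul contDiff_const), by simp, by simp, by simp, by simp,
    rfl⟩

lemma dCM_set_nonempty (ω : H →L[ℝ] H →L[ℝ] C) (x y : H × C) :
    Set.Nonempty {L : ℝ | ∃ w : ℝ → H, ∃ c : ℝ → C, ContDiff ℝ 1 w ∧ ContDiff ℝ 1 c ∧
      w 0 = x.1 ∧ c 0 = x.2 ∧ w 1 = y.1 ∧ c 1 = y.2 ∧ L = pathLen ω w c} :=
  ⟨_, linPath_mem ω x y⟩

lemma dCM_set_bddBelow (ω : H →L[ℝ] H →L[ℝ] C) (x y : H × C) :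
    BddBelow {L : ℝ | ∃ w : ℝ → H, ∃ c : ℝ → C, ContDiff ℝ 1 w ∧ ContDiff ℝ 1 c ∧
      w 0 = x.1 ∧ c 0 = x.2 ∧ w 1 = y.1 ∧ c 1 = y.2 ∧ L = pathLen ω w c} := by
  refine ⟨0, fun L hL => ?_⟩
  obtain ⟨w, c, _, _, _, _, _, _, rfl⟩ := hL
  exact pathLen_nonneg ω w c

lemma deriv_linPath (x v : H) : deriv (fun s : ℝ => x + s • v) = fun _ => v := by
  funext s
  exact (((hasDerivAt_id s).smul_const v).const_add x).deriv.trans (one_smul ℝ v)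

lemma dCM_le_norm (ω : H →L[ℝ] H →L[ℝ] C) (x y : H × C) :
    dCM ω x y ≤ ‖y.1 - x.1‖ + ‖y.2 - x.2‖
      + 2⁻¹ * ‖ω‖ * (‖x.1‖ + ‖y.1 - x.1‖) * ‖y.1 - x.1‖ := by
  set v := y.1 - x.1 with hv
  set u := y.2 - x.2 with hu
  have hle : dCM ω x y ≤ pathLen ω (fun s => x.1 + s • v) (fun s => x.2 + s • u) :=
    csInf_le (dCM_set_bddBelow ω x y) (linPath_mem ω x y)
  refine le_trans hle ?_
  rw [pathLen, deriv_linPath, deriv_linPath]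
  set M := ‖v‖ + ‖u‖ + 2⁻¹ * ‖ω‖ * (‖x.1‖ + ‖v‖) * ‖v‖ with hM
  have hcont : Continuous fun s : ℝ =>
      Real.sqrt (‖v‖ ^ 2 + ‖u - (2:ℝ)⁻¹ • ω (x.1 + s • v) v‖ ^ 2) := by
    have h1 : Continuous fun s : ℝ => ω (x.1 + s • v) v :=
      (ω.flip v).continuous.comp (continuous_const.add (continuous_id.smul continuous_const))
    exact Real.continuous_sqrt.comp (continuous_const.add
      ((continuous_const.sub (continuous_const.smul h1)).norm.pow 2))
  calc (∫ s in (0:ℝ)..1, Real.sqrt (‖v‖ ^ 2 + ‖u - (2:ℝ)⁻¹ • ω (x.1 + s • v) v‖ ^ 2))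
      ≤ ∫ _ in (0:ℝ)..1, M := by
        apply intervalIntegral.integral_mono_on zero_le_one (hcont.intervalIntegrable _ _)
          intervalIntegrable_const
        intro s hs
        have h2 : ‖u - (2:ℝ)⁻¹ • ω (x.1 + s • v) v‖
            ≤ ‖u‖ + 2⁻¹ * ‖ω‖ * (‖x.1‖ + ‖v‖) * ‖v‖ := by
          calc ‖u - (2:ℝ)⁻¹ • ω (x.1 + s • v) v‖
              ≤ ‖u‖ + ‖(2:ℝ)⁻¹ • ω (x.1 + s • v) v‖ := norm_sub_le _ _
            _ ≤ ‖u‖ + 2⁻¹ * ‖ω‖ * (‖x.1‖ + ‖v‖) * ‖v‖ := by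
                rw [norm_smul]
                simp only [norm_inv, Real.norm_ofNat]
                have h3 : ‖ω (x.1 + s • v) v‖ ≤ ‖ω‖ * ‖x.1 + s • v‖ * ‖v‖ := ω.le_opNorm₂ _ _
                have h4 : ‖x.1 + s • v‖ ≤ ‖x.1‖ + ‖v‖ := by
                  calc ‖x.1 + s • v‖ ≤ ‖x.1‖ + ‖s • v‖ := norm_add_le _ _
                    _ ≤ ‖x.1‖ + ‖v‖ := by
                        rw [norm_smul, Real.norm_eq_abs]
                        have : |s| ≤ 1 := abs_le.2 ⟨by linarith [hs.1], hs.2⟩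
                        nlinarith [norm_nonneg v, this, abs_nonneg s]
                have h5 : ‖ω‖ * ‖x.1 + s • v‖ * ‖v‖ ≤ ‖ω‖ * (‖x.1‖ + ‖v‖) * ‖v‖ :=
                  mul_le_mul_of_nonneg_right
                    (mul_le_mul_of_nonneg_left h4 (norm_nonneg ω)) (norm_nonneg v)
                nlinarith [norm_nonneg (ω (x.1 + s • v) v)]
        have h6 := sqrt_sq_add_sq_le (norm_nonneg v)
          (norm_nonneg (u - (2:ℝ)⁻¹ • ω (x.1 + s • v) v))
        rw [hM]; linarith
    _ = M := by rw [intervalIntegral.integral_const]; simp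

end AuxLemmas

/-- There exists `K < ∞` such that whenever `d(x,y) < 1/(2 C(ω))` (with `1/0 = ∞`),
`‖y − x‖ ≤ K (1 + min(‖x‖,‖y‖)) d(x,y)`.  Consequently the topology on `𝔤_CM` induced by `d`
coincides with the norm topology. -/
theorem norm_le_dist_bound_and_topologies_agree
    {H C : Type*} [NormedAddCommGroup H] [InnerProductSpace ℝ H]
    [TopologicalSpace.SeparableSpace H]
    [NormedAddCommGroup C] [InnerProductSpace ℝ C] [FiniteDimensional ℝ C]
    (ω : H →L[ℝ] H →L[ℝ] C)
    (hskew : ∀ A B : H, ω A B = - ω B A) :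
    (∃ K : ℝ, ∀ x y : H × C,
      ENNReal.ofReal (dCM ω x y) < (ENNReal.ofReal (2 * ‖ω‖))⁻¹ →
        gNorm (y - x) ≤ K * (1 + min (gNorm x) (gNorm y)) * dCM ω x y) ∧
    (∀ x : H × C, ∀ ε : ℝ, 0 < ε → ∃ δ : ℝ, 0 < δ ∧
      (∀ y : H × C, gNorm (y - x) < δ → dCM ω x y < ε) ∧
      (∀ y : H × C, dCM ω x y < δ → gNorm (y - x) < ε)) := by
  have hω0 : (0:ℝ) ≤ ‖ω‖ := norm_nonneg ω
  constructor
  · -- Part 1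
    refine ⟨3 + ‖ω‖, fun x y h => ?_⟩
    set K := 3 + ‖ω‖ with hK
    set m := min (gNorm x) (gNorm y) with hm
    have hm0 : 0 ≤ m := le_min (gNorm_nonneg x) (gNorm_nonneg y)
    have hKm : 0 < K * (1 + m) := by nlinarith
    set S := {L : ℝ | ∃ w : ℝ → H, ∃ c : ℝ → C, ContDiff ℝ 1 w ∧ ContDiff ℝ 1 c ∧
      w 0 = x.1 ∧ c 0 = x.2 ∧ w 1 = y.1 ∧ c 1 = y.2 ∧ L = pathLen ω w c} with hSdef
    have hSne : S.Nonempty := dCM_set_nonempty ω x y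
    have hd : dCM ω x y = sInf S := rfl
    have claim : ∀ L ∈ S, ‖ω‖ * L ≤ 1 → gNorm (y - x) ≤ K * (1 + m) * L := by
      rintro L ⟨w, c, hw, hc, hw0, hc0, hw1, hc1, rfl⟩ hωL
      have hℓ0 := pathLen_nonneg ω w c
      have hg : gNorm (y - x) ≤ ‖w 1 - w 0‖ + ‖c 1 - c 0‖ := by
        have := gNorm_le (y - x)
        rw [Prod.fst_sub, Prod.snd_sub] at this
        rw [hw0, hw1, hc0, hc1]
        exact this
      rcases le_total (gNorm x) (gNorm y) with hxy | hxy
      · obtain ⟨h1, h2⟩ := pathLen_bounds ω hw hc (t := 0) le_rfl zero_le_one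
        have hwt : ‖w 0‖ ≤ m := by
          rw [hw0, hm, min_eq_left hxy]; exact fst_le_gNorm x
        nlinarith [mul_nonneg (mul_nonneg hω0 (sub_nonneg.2 hwt)) hℓ0,
          mul_nonneg (sub_nonneg.2 hωL) hℓ0, mul_nonneg hm0 hℓ0,
          mul_nonneg (mul_nonneg hω0 hm0) hℓ0, mul_nonneg hω0 hℓ0,
          norm_nonneg (w 0)]
      · obtain ⟨h1, h2⟩ := pathLen_bounds ω hw hc (t := 1) zero_le_one le_rfl
        have hwt : ‖w 1‖ ≤ m := by
          rw [hw1, hm, min_eq_right hxy]; exact fst_le_gNorm y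
        nlinarith [mul_nonneg (mul_nonneg hω0 (sub_nonneg.2 hwt)) hℓ0,
          mul_nonneg (sub_nonneg.2 hωL) hℓ0, mul_nonneg hm0 hℓ0,
          mul_nonneg (mul_nonneg hω0 hm0) hℓ0, mul_nonneg hω0 hℓ0,
          norm_nonneg (w 1)]
    rcases eq_or_lt_of_le hω0 with hωz | hωz
    · -- ‖ω‖ = 0
      have hlb : ∀ L ∈ S, gNorm (y - x) / (K * (1 + m)) ≤ L := by
        intro L hL
        have h0L : 0 ≤ L := by
          obtain ⟨w, c, _, _, _, _, _, _, rfl⟩ := hL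
          exact pathLen_nonneg ω w c
        have hcl := claim L hL (by rw [← hωz]; simpa using h0L)
        rw [div_le_iff₀ hKm]
        nlinarith
      have hle := le_csInf hSne hlb
      rw [← hd, div_le_iff₀ hKm] at hle
      nlinarith
    · -- ‖ω‖ > 0
      have h2ω : (0:ℝ) < 2 * ‖ω‖ := by linarith
      rw [← ENNReal.ofReal_inv_of_pos h2ω] at h
      have hdlt : dCM ω x y < (2 * ‖ω‖)⁻¹ :=
        (ENNReal.ofReal_lt_ofReal_iff (by positivity)).1 h
      apply le_of_forall_pos_le_add
      intro ε hε
      set ε' := min (ε / (K * (1 + m))) ((2 * ‖ω‖)⁻¹ - dCM ω x y) with hε'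
      have hε'0 : 0 < ε' := lt_min (by positivity) (by linarith)
      obtain ⟨L, hLS, hLlt⟩ := exists_lt_of_csInf_lt hSne
        (show sInf S < dCM ω x y + ε' by rw [← hd]; linarith)
      have hL1 : L < (2 * ‖ω‖)⁻¹ := by
        have := min_le_right (ε / (K * (1 + m))) ((2 * ‖ω‖)⁻¹ - dCM ω x y)
        have hε'2 : ε' ≤ (2 * ‖ω‖)⁻¹ - dCM ω x y := by rw [hε']; exact this
        linarith
      have hωL : ‖ω‖ * L ≤ 1 := by
        have h5 : ‖ω‖ * L ≤ ‖ω‖ * (2 * ‖ω‖)⁻¹ :=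
          mul_le_mul_of_nonneg_left hL1.le hω0
        have h6 : (2 * ‖ω‖) * (2 * ‖ω‖)⁻¹ = 1 := mul_inv_cancel₀ h2ω.ne'
        nlinarith
      have hcl := claim L hLS hωL
      have h7 : K * (1 + m) * L ≤ K * (1 + m) * (dCM ω x y + ε') :=
        mul_le_mul_of_nonneg_left hLlt.le hKm.le
      have h8 : ε' ≤ ε / (K * (1 + m)) := min_le_left _ _
      have h9 : K * (1 + m) * ε' ≤ ε := by
        have h10 := mul_le_mul_of_nonneg_left h8 hKm.le
        rw [mul_comm (K * (1 + m)) (ε / (K * (1 + m))), div_mul_cancel₀ _ hKm.ne'] at h10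
        exact h10
      nlinarith
  · -- Part 2
    intro x ε hε
    set N := 2 + 2⁻¹ * ‖ω‖ * (‖x.1‖ + 1) with hN
    have hN0 : (0:ℝ) < N := by positivity
    have hεN : 0 < ε / (2 * N) := div_pos hε (by linarith)
    set δ := min 1 (ε / (2 * N)) with hδ
    have hδ0 : 0 < δ := lt_min one_pos hεN
    have hδ1 : δ ≤ 1 := min_le_left _ _
    have hδ2 : δ ≤ ε / (2 * N) := min_le_right _ _
    have hNne : N ≠ 0 := hN0.ne'
    clear_value N δ
    have hNδ : N * δ ≤ ε / 2 := by
      have := mul_le_mul_of_nonneg_left hδ2 hN0.le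
      have heq : N * (ε / (2 * N)) = ε / 2 := by field_simp
      linarith
    refine ⟨δ, hδ0, ?_, ?_⟩
    · intro y hy
      have ha1 : ‖y.1 - x.1‖ ≤ gNorm (y - x) := by
        have := fst_le_gNorm (y - x); rwa [Prod.fst_sub] at this
      have ha2 : ‖y.2 - x.2‖ ≤ gNorm (y - x) := by
        have := snd_le_gNorm (y - x); rwa [Prod.snd_sub] at this
      have ha1' : ‖y.1 - x.1‖ < δ := lt_of_le_of_lt ha1 hy
      have ha2' : ‖y.2 - x.2‖ < δ := lt_of_le_of_lt ha2 hy
      have hub := dCM_le_norm ω x y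
      have t1 : (‖x.1‖ + ‖y.1 - x.1‖) * ‖y.1 - x.1‖ ≤ (‖x.1‖ + 1) * δ :=
        mul_le_mul (by linarith) ha1'.le (norm_nonneg _) (by positivity)
      have t2 := mul_le_mul_of_nonneg_left t1 hω0
      have expand : N * δ = 2 * δ + 2⁻¹ * (‖ω‖ * ((‖x.1‖ + 1) * δ)) := by rw [hN]; ring
      have hlt : dCM ω x y < N * δ := by linarith [hub, t2, expand]
      linarith
    · intro y hy
      obtain ⟨L, hLS, hLδ⟩ := exists_lt_of_csInf_lt (dCM_set_nonempty ω x y) hy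
      obtain ⟨w, c, hw, hc, hw0, hc0, hw1, hc1, rfl⟩ := hLS
      have hℓ0 := pathLen_nonneg ω w c
      obtain ⟨h1, h2⟩ := pathLen_bounds ω hw hc (t := 0) le_rfl zero_le_one
      rw [hw0] at h2
      have hg : gNorm (y - x) ≤ ‖w 1 - w 0‖ + ‖c 1 - c 0‖ := by
        have := gNorm_le (y - x)
        rw [Prod.fst_sub, Prod.snd_sub] at this
        rw [hw0, hw1, hc0, hc1]
        exact this
      have hℓ1 : pathLen ω w c ≤ 1 := le_trans hLδ.le hδ1
      have hgN : gNorm (y - x) ≤ N * pathLen ω w c := by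
        have f1 : 0 ≤ ‖ω‖ * (pathLen ω w c * (1 - pathLen ω w c)) :=
          mul_nonneg hω0 (mul_nonneg hℓ0 (by linarith))
        have expand2 : N * pathLen ω w c
            = 2 * pathLen ω w c + 2⁻¹ * (‖ω‖ * ((‖x.1‖ + 1) * pathLen ω w c)) := by
          rw [hN]; ring
        linarith [hg, h1, h2, f1, expand2]
      have : N * pathLen ω w c < N * δ := mul_lt_mul_of_pos_left hLδ hN0
      linarith
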